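/- Let Ω ∪ Ω_I ⊂ ℝ^d and let γ : (Ω∪Ω_I)×(Ω∪Ω_I) → ℝ be a symmetric kernel (γ(x,y)=γ(y,x)). Define the nonlocal operator (L u)(x) = 2∫_{Ω∪Ω_I} (u(y)-u(x)) γ(x,y) dy for x ∈ Ω and (N u)(x) = -2∫_{Ω∪Ω_I} (u(y)-u(x)) γ(x,y) dy for x ∈ Ω_I. Then for all sufficiently regular u, v (e.g. bounded measurable with all integrals absolutely convergent), the nonlocal Green's first identity holds: ∫_{Ω∪Ω_I}∫_{Ω∪Ω_I} (v(y)-v(x))(u(y)-u(x)) γ(x,y) dy dx = -∫_Ω v(x) (L u)(x) dx + ∫_{Ω_I} v(x) (N u)(x) dx. -/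

import Mathlib

open MeasureTheory

/-- Nonlocal Green's first identity. -/
theorem nonlocal_green_first_identity
    {d : ℕ} (Ω ΩI : Set (EuclideanSpace ℝ (Fin d)))
    (hΩ : MeasurableSet Ω) (hΩI : MeasurableSet ΩI)
    (hdisj : Disjoint Ω ΩI)
    (hfin : volume (Ω ∪ ΩI) < ⊤)
    (γ : EuclideanSpace ℝ (Fin d) → EuclideanSpace ℝ (Fin d) → ℝ)
    (hγmeas : Measurable (Function.uncurry γ))
    (hγnonneg : ∀ x y, 0 ≤ γ x y)
    (hγsymm : ∀ x y, γ x y = γ y x)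
    (u v : EuclideanSpace ℝ (Fin d) → ℝ)
    (hu : Measurable u) (hv : Measurable v)
    (hub : ∃ M, ∀ x, |u x| ≤ M) (hvb : ∃ M, ∀ x, |v x| ≤ M)
    (hγint : IntegrableOn (fun p : EuclideanSpace ℝ (Fin d) × EuclideanSpace ℝ (Fin d) =>
      γ p.1 p.2) ((Ω ∪ ΩI) ×ˢ (Ω ∪ ΩI))) :
    ∫ x in Ω ∪ ΩI, ∫ y in Ω ∪ ΩI, (v y - v x) * (u y - u x) * γ x y
      = -(∫ x in Ω, v x * (2 * ∫ y in Ω ∪ ΩI, (u y - u x) * γ x y))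
        + ∫ x in ΩI, v x * (-(2 * ∫ y in Ω ∪ ΩI, (u y - u x) * γ x y)) := by
  classical
  obtain ⟨Mu, hMu⟩ := hub
  obtain ⟨Mv, hMv⟩ := hvb
  have hMu0 : 0 ≤ Mu := le_trans (abs_nonneg _) (hMu 0)
  have hMv0 : 0 ≤ Mv := le_trans (abs_nonneg _) (hMv 0)
  set S : Set (EuclideanSpace ℝ (Fin d)) := Ω ∪ ΩI with hSdef
  set μ : Measure (EuclideanSpace ℝ (Fin d)) := volume.restrict S with hμdef
  have hγμ : Integrable (fun p : EuclideanSpace ℝ (Fin d) × EuclideanSpace ℝ (Fin d) => γ p.1 p.2) (μ.prod μ) := by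
    rw [hμdef, Measure.prod_restrict, ← Measure.volume_eq_prod]; exact hγint
  have hγm2 : Measurable (fun p : EuclideanSpace ℝ (Fin d) × EuclideanSpace ℝ (Fin d) => γ p.1 p.2) := hγmeas
  -- bounds on differences
  have hdu : ∀ p : EuclideanSpace ℝ (Fin d) × EuclideanSpace ℝ (Fin d), ‖u p.2 - u p.1‖ ≤ Mu + Mu := fun p => by
    rw [Real.norm_eq_abs]
    exact (abs_sub _ _).trans (add_le_add (hMu _) (hMu _))
  have hdv : ∀ p : EuclideanSpace ℝ (Fin d) × EuclideanSpace ℝ (Fin d), ‖v p.2 - v p.1‖ ≤ Mv + Mv := fun p => by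
    rw [Real.norm_eq_abs]
    exact (abs_sub _ _).trans (add_le_add (hMv _) (hMv _))
  -- integrability of the various products
  have hI0 : Integrable (fun p : EuclideanSpace ℝ (Fin d) × EuclideanSpace ℝ (Fin d) => (u p.2 - u p.1) * γ p.1 p.2) (μ.prod μ) :=
    hγμ.bdd_mul (((hu.comp measurable_snd).sub (hu.comp measurable_fst)).aestronglyMeasurable)
      (Filter.Eventually.of_forall hdu)
  have hI1 : Integrable (fun p : EuclideanSpace ℝ (Fin d) × EuclideanSpace ℝ (Fin d) => (v p.2 - v p.1) * ((u p.2 - u p.1) * γ p.1 p.2))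
      (μ.prod μ) :=
    hI0.bdd_mul (((hv.comp measurable_snd).sub (hv.comp measurable_fst)).aestronglyMeasurable)
      (Filter.Eventually.of_forall hdv)
  have hI2 : Integrable (fun p : EuclideanSpace ℝ (Fin d) × EuclideanSpace ℝ (Fin d) => v p.2 * ((u p.2 - u p.1) * γ p.1 p.2)) (μ.prod μ) :=
    hI0.bdd_mul ((hv.comp measurable_snd).aestronglyMeasurable)
      (Filter.Eventually.of_forall fun p => by simpa [Real.norm_eq_abs] using hMv p.2)
  have hI3 : Integrable (fun p : EuclideanSpace ℝ (Fin d) × EuclideanSpace ℝ (Fin d) => v p.1 * ((u p.2 - u p.1) * γ p.1 p.2)) (μ.prod μ) :=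
    hI0.bdd_mul ((hv.comp measurable_fst).aestronglyMeasurable)
      (Filter.Eventually.of_forall fun p => by simpa [Real.norm_eq_abs] using hMv p.1)
  -- I is the key quantity
  set I : ℝ := ∫ p : EuclideanSpace ℝ (Fin d) × EuclideanSpace ℝ (Fin d), v p.1 * ((u p.2 - u p.1) * γ p.1 p.2) ∂(μ.prod μ) with hIdef
  -- swap symmetry: the v p.2 integral equals -I
  have hswap : ∫ p : EuclideanSpace ℝ (Fin d) × EuclideanSpace ℝ (Fin d), v p.2 * ((u p.2 - u p.1) * γ p.1 p.2) ∂(μ.prod μ) = -I := by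
    have h1 := integral_prod_swap (μ := μ) (ν := μ)
      (fun p : EuclideanSpace ℝ (Fin d) × EuclideanSpace ℝ (Fin d) => v p.2 * ((u p.2 - u p.1) * γ p.1 p.2))
    rw [← h1]
    have h2 : ∀ z : EuclideanSpace ℝ (Fin d) × EuclideanSpace ℝ (Fin d), v z.swap.2 * ((u z.swap.2 - u z.swap.1) * γ z.swap.1 z.swap.2)
        = -(v z.1 * ((u z.2 - u z.1) * γ z.1 z.2)) := by
      intro z
      simp only [Prod.fst_swap, Prod.snd_swap]
      rw [hγsymm z.2 z.1]
      ring
    simp_rw [h2]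
    rw [integral_neg]
  -- LHS as product integral
  have hLHS : (∫ x in S, ∫ y in S, (v y - v x) * (u y - u x) * γ x y) = -2 * I := by
    have h1 : (∫ x in S, ∫ y in S, (v y - v x) * (u y - u x) * γ x y)
        = ∫ p : EuclideanSpace ℝ (Fin d) × EuclideanSpace ℝ (Fin d), (v p.2 - v p.1) * ((u p.2 - u p.1) * γ p.1 p.2) ∂(μ.prod μ) := by
      have := integral_integral (μ := μ) (ν := μ)
        (f := fun x y => (v y - v x) * ((u y - u x) * γ x y)) hI1
      simp_rw [← mul_assoc] at this ⊢
      exact this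
    rw [h1]
    have h2 : ∀ p : EuclideanSpace ℝ (Fin d) × EuclideanSpace ℝ (Fin d), (v p.2 - v p.1) * ((u p.2 - u p.1) * γ p.1 p.2)
        = v p.2 * ((u p.2 - u p.1) * γ p.1 p.2) - v p.1 * ((u p.2 - u p.1) * γ p.1 p.2) := by
      intro p; ring
    simp_rw [h2]
    rw [integral_sub hI2 hI3, hswap, ← hIdef]
    ring
  -- I as iterated integral
  have hIiter : I = ∫ x in S, v x * ∫ y in S, (u y - u x) * γ x y := by
    rw [hIdef, ← integral_integral (f := fun x y => v x * ((u y - u x) * γ x y)) hI3]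
    congr 1
    ext x
    rw [integral_const_mul]
  -- integrability of the marginal
  have hF : Integrable (fun x => ∫ y in S, (u y - u x) * γ x y) μ := by
    have := hI0.integral_prod_left
    simpa using this
  have hG : Integrable (fun x => v x * (2 * ∫ y in S, (u y - u x) * γ x y)) μ := by
    refine (hF.const_mul 2).bdd_mul hv.aestronglyMeasurable (Filter.Eventually.of_forall fun x => by
      simpa [Real.norm_eq_abs] using hMv x)
  have hrΩ : μ.restrict Ω = volume.restrict Ω := by
    rw [hμdef, Measure.restrict_restrict hΩ, Set.inter_eq_self_of_subset_left Set.subset_union_left]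
  have hrΩI : μ.restrict ΩI = volume.restrict ΩI := by
    rw [hμdef, Measure.restrict_restrict hΩI,
      Set.inter_eq_self_of_subset_left Set.subset_union_right]
  have hGΩ : IntegrableOn (fun x => v x * (2 * ∫ y in S, (u y - u x) * γ x y)) Ω volume := by
    rw [IntegrableOn, ← hrΩ]; exact hG.restrict
  have hGΩI : IntegrableOn (fun x => v x * (2 * ∫ y in S, (u y - u x) * γ x y)) ΩI volume := by
    rw [IntegrableOn, ← hrΩI]; exact hG.restrict
  -- now combine
  have hsplit : ∫ x in S, v x * (2 * ∫ y in S, (u y - u x) * γ x y)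
      = (∫ x in Ω, v x * (2 * ∫ y in S, (u y - u x) * γ x y))
        + ∫ x in ΩI, v x * (2 * ∫ y in S, (u y - u x) * γ x y) :=
    setIntegral_union hdisj hΩI hGΩ hGΩI
  have hRHSneg : (∫ x in ΩI, v x * (-(2 * ∫ y in S, (u y - u x) * γ x y)))
      = -∫ x in ΩI, v x * (2 * ∫ y in S, (u y - u x) * γ x y) := by
    simp_rw [mul_neg]
    exact integral_neg _
  have h2I : ∫ x in S, v x * (2 * ∫ y in S, (u y - u x) * γ x y) = 2 * I := by
    rw [hIiter, ← integral_const_mul]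
    congr 1; ext x; ring
  rw [hLHS, hRHSneg]
  have := hsplit.symm
  rw [h2I] at hsplit
  linarith [hsplit]
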